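/- Let ℓ > 0, 0 < ν ≤ v*, k* ≥ 0, and let v, k : ℝ → ℝ be measurable with ν ≤ v(x) ≤ v* and |k(x)| ≤ k* for a.e. x ∈ [0, ℓ]. Define τ(x) := ∫₀ˣ 1/v(s) ds and ξ(x) := ∫₀ˣ k(s)/v(s) ds; since τ is strictly increasing and continuous on [0, ℓ] with τ(0) = 0, for each t ∈ [0, τ(ℓ)] let π(t) denote the unique point of [0, ℓ] with τ(π(t)) = τ(ℓ) − t. Then for every real p ≥ 1 and every measurable f : ℝ → ℝ: ∫₀^{τ(ℓ)} e^{p ξ(π(t))} |f(π(t))|^p dt ≤ (1/ν) · e^{p ℓ k*/ν} · ∫₀^ℓ |f(x)|^p dx (the integrals being Lebesgue integrals of nonnegative measurable functions, with values in [0, ∞]). -/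

import Mathlib

open MeasureTheory

/-- With `τ x = ∫₀ˣ 1/v`, `ξ x = ∫₀ˣ k/v`, `ν ≤ v ≤ v*` and `|k| ≤ k*` a.e.
on `[0, ℓ]`, and `π : [0, τ(ℓ)] → [0, ℓ]` the backward characteristic defined by
`τ (π t) = τ ℓ - t`, for every `p ≥ 1` and measurable `f`:
`∫₀^{τ(ℓ)} e^{pξ(π t)} |f(π t)|^p dt ≤ (1/ν) e^{pℓk*/ν} ∫₀^ℓ |f|^p`. -/
theorem stmt_10 (ℓ ν vs ks : ℝ) (hℓ : 0 < ℓ) (hν : 0 < ν) (hνvs : ν ≤ vs) (hks : 0 ≤ ks)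
    (v k : ℝ → ℝ) (hv : Measurable v) (hk : Measurable k)
    (hvb : ∀ᵐ x ∂(volume.restrict (Set.Icc 0 ℓ)), ν ≤ v x ∧ v x ≤ vs)
    (hkb : ∀ᵐ x ∂(volume.restrict (Set.Icc 0 ℓ)), |k x| ≤ ks)
    (τ ξ : ℝ → ℝ)
    (hτ : ∀ x : ℝ, τ x = ∫ s in (0 : ℝ)..x, 1 / v s)
    (hξ : ∀ x : ℝ, ξ x = ∫ s in (0 : ℝ)..x, k s / v s)
    (π : ℝ → ℝ)
    (hπ : ∀ t ∈ Set.Icc (0 : ℝ) (τ ℓ), π t ∈ Set.Icc (0 : ℝ) ℓ ∧ τ (π t) = τ ℓ - t)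
    (p : ℝ) (hp : 1 ≤ p) (f : ℝ → ℝ) (hf : Measurable f) :
    ∫⁻ t in Set.Icc (0 : ℝ) (τ ℓ),
        ENNReal.ofReal (Real.exp (p * ξ (π t)) * |f (π t)| ^ p)
      ≤ ENNReal.ofReal ((1 / ν) * Real.exp (p * ℓ * ks / ν)) *
        ∫⁻ x in Set.Icc (0 : ℝ) ℓ, ENNReal.ofReal (|f x| ^ p) := by
  have hvs : 0 < vs := lt_of_lt_of_le hν hνvs
  set T := τ ℓ with hT
  -- integrability of 1/v and k/v on [0, ℓ]
  have hmeas1 : Measurable fun s => 1 / v s := hv.const_div 1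
  have hmeas2 : Measurable fun s => k s / v s := hk.div hv
  have hvolfin : volume (Set.Icc (0:ℝ) ℓ) < ⊤ := by
    rw [Real.volume_Icc]; exact ENNReal.ofReal_lt_top
  have hconst1 : IntegrableOn (fun _ : ℝ => (1/ν : ℝ)) (Set.Icc 0 ℓ) volume :=
    integrableOn_const hvolfin.ne
  have hconst2 : IntegrableOn (fun _ : ℝ => (ks/ν : ℝ)) (Set.Icc 0 ℓ) volume :=
    integrableOn_const hvolfin.ne
  have hint1 : IntegrableOn (fun s => 1 / v s) (Set.Icc 0 ℓ) := by
    refine Integrable.mono' hconst1 hmeas1.aestronglyMeasurable ?_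
    filter_upwards [hvb] with x hx
    have hv0 : 0 < v x := lt_of_lt_of_le hν hx.1
    rw [Real.norm_eq_abs, abs_of_nonneg (le_of_lt (one_div_pos.2 hv0))]
    exact one_div_le_one_div_of_le hν hx.1
  have hint2 : IntegrableOn (fun s => k s / v s) (Set.Icc 0 ℓ) := by
    refine Integrable.mono' hconst2 hmeas2.aestronglyMeasurable ?_
    filter_upwards [hvb, hkb] with x hx hkx
    have hv0 : 0 < v x := lt_of_lt_of_le hν hx.1
    rw [Real.norm_eq_abs, abs_div, abs_of_pos hv0]
    exact div_le_div₀ hks hkx hν hx.1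
  -- increment bounds for τ
  have hτd : ∀ a b : ℝ, 0 ≤ a → a ≤ b → b ≤ ℓ →
      (b - a) / vs ≤ τ b - τ a ∧ τ b - τ a ≤ (b - a) / ν := by
    intro a b ha hab hbl
    have hsub : Set.uIcc a b ⊆ Set.Icc 0 ℓ := by
      rw [Set.uIcc_of_le hab]; exact Set.Icc_subset_Icc ha hbl
    have hsub0a : Set.uIcc (0:ℝ) a ⊆ Set.Icc 0 ℓ := by
      rw [Set.uIcc_of_le ha]; exact Set.Icc_subset_Icc le_rfl (hab.trans hbl)
    have hsub0b : Set.uIcc (0:ℝ) b ⊆ Set.Icc 0 ℓ := by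
      rw [Set.uIcc_of_le (ha.trans hab)]; exact Set.Icc_subset_Icc le_rfl hbl
    have hIab : IntervalIntegrable (fun s => 1 / v s) volume a b :=
      (hint1.mono_set hsub).intervalIntegrable
    have hI0a : IntervalIntegrable (fun s => 1 / v s) volume 0 a :=
      (hint1.mono_set hsub0a).intervalIntegrable
    have hI0b : IntervalIntegrable (fun s => 1 / v s) volume 0 b :=
      (hint1.mono_set hsub0b).intervalIntegrable
    have hdiff : τ b - τ a = ∫ s in a..b, 1 / v s := by
      rw [hτ a, hτ b]
      exact intervalIntegral.integral_interval_sub_left hI0b hI0a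
    have hvb' : ∀ᵐ x ∂(volume.restrict (Set.Icc a b)), ν ≤ v x ∧ v x ≤ vs :=
      ae_restrict_of_ae_restrict_of_subset (Set.Icc_subset_Icc ha hbl) hvb
    constructor
    · rw [hdiff]
      have : ∫ s in a..b, (1 / vs : ℝ) ≤ ∫ s in a..b, 1 / v s := by
        refine intervalIntegral.integral_mono_ae_restrict hab intervalIntegrable_const hIab ?_
        filter_upwards [hvb'] with x hx
        exact one_div_le_one_div_of_le (lt_of_lt_of_le hν hx.1) hx.2
      rwa [intervalIntegral.integral_const, smul_eq_mul, mul_one_div] at this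
    · rw [hdiff]
      have : ∫ s in a..b, 1 / v s ≤ ∫ s in a..b, (1 / ν : ℝ) := by
        refine intervalIntegral.integral_mono_ae_restrict hab hIab intervalIntegrable_const ?_
        filter_upwards [hvb'] with x hx
        exact one_div_le_one_div_of_le hν hx.1
      rwa [intervalIntegral.integral_const, smul_eq_mul, mul_one_div] at this
  have hτ0 : τ 0 = 0 := by rw [hτ]; simp
  have hT0 : 0 ≤ T := by
    have h1 := (hτd 0 ℓ le_rfl hℓ.le le_rfl).1
    rw [hτ0] at h1
    have h2 : 0 ≤ (ℓ - 0) / vs := div_nonneg (by linarith) hvs.le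
    simp only [hT]
    linarith
  -- bound on ξ
  have hξb : ∀ x ∈ Set.Icc (0:ℝ) ℓ, ξ x ≤ ℓ * ks / ν := by
    intro x hx
    have hsub0x : Set.uIcc (0:ℝ) x ⊆ Set.Icc 0 ℓ := by
      rw [Set.uIcc_of_le hx.1]; exact Set.Icc_subset_Icc le_rfl hx.2
    have hI0x : IntervalIntegrable (fun s => k s / v s) volume 0 x :=
      (hint2.mono_set hsub0x).intervalIntegrable
    have hkb' : ∀ᵐ s ∂(volume.restrict (Set.Icc (0:ℝ) x)),
        (fun s => k s / v s) s ≤ (fun _ => (ks / ν : ℝ)) s := by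
      have h1 := ae_restrict_of_ae_restrict_of_subset (Set.Icc_subset_Icc le_rfl hx.2) hvb
      have h2 := ae_restrict_of_ae_restrict_of_subset (Set.Icc_subset_Icc le_rfl hx.2) hkb
      filter_upwards [h1, h2] with s hs hks'
      have hv0 : 0 < v s := lt_of_lt_of_le hν hs.1
      exact div_le_div₀ hks (le_trans (le_abs_self _) hks') hν hs.1
    have hb : ξ x ≤ x * (ks / ν) := by
      rw [hξ x]
      have := intervalIntegral.integral_mono_ae_restrict hx.1 hI0x
        intervalIntegrable_const hkb'
      rwa [intervalIntegral.integral_const, smul_eq_mul, sub_zero] at this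
    calc ξ x ≤ x * (ks / ν) := hb
      _ ≤ ℓ * (ks / ν) := by
          apply mul_le_mul_of_nonneg_right hx.2 (by positivity)
      _ = ℓ * ks / ν := by ring
  -- π is decreasing and Lipschitz on [0, T]
  have hπlip : ∀ t1 ∈ Set.Icc (0:ℝ) T, ∀ t2 ∈ Set.Icc (0:ℝ) T, t1 ≤ t2 →
      0 ≤ π t1 - π t2 ∧ π t1 - π t2 ≤ vs * (t2 - t1) := by
    intro t1 h1 t2 h2 h12
    obtain ⟨hx1, hτ1⟩ := hπ t1 h1
    obtain ⟨hx2, hτ2⟩ := hπ t2 h2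
    have hle : π t2 ≤ π t1 := by
      by_contra hc
      push_neg at hc
      have hd := (hτd (π t1) (π t2) hx1.1 hc.le hx2.2).1
      have hpos : 0 < (π t2 - π t1) / vs := div_pos (sub_pos.2 hc) hvs
      rw [hτ1, hτ2] at hd
      linarith
    constructor
    · linarith
    · have hd := (hτd (π t2) (π t1) hx2.1 hle hx1.2).1
      rw [hτ1, hτ2] at hd
      have := (div_le_iff₀ hvs).mp hd
      nlinarith
  -- extension π' of π from [0,T] to ℝ
  set π' : ℝ → ℝ := fun t => π ((Set.projIcc (0:ℝ) T hT0 t : Set.Icc (0:ℝ) T) : ℝ) with hπ'def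
  have hπ'eq : ∀ t ∈ Set.Icc (0:ℝ) T, π' t = π t := by
    intro t ht
    simp only [hπ'def, Set.projIcc_of_mem hT0 ht]
  have hπLipOn : LipschitzOnWith (Real.toNNReal vs) π (Set.Icc 0 T) := by
    rw [lipschitzOnWith_iff_dist_le_mul]
    intro x hx y hy
    rw [Real.coe_toNNReal vs hvs.le, Real.dist_eq, Real.dist_eq]
    rcases le_total x y with hxy | hxy
    · obtain ⟨ha, hb⟩ := hπlip x hx y hy hxy
      rw [abs_of_nonneg ha, abs_of_nonpos (by linarith)]
      linarith
    · obtain ⟨ha, hb⟩ := hπlip y hy x hx hxy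
      rw [abs_of_nonpos (by linarith), abs_of_nonneg (by linarith)]
      linarith
  have hπ'cont : Continuous π' :=
    hπLipOn.continuousOn.comp_continuous
      (continuous_subtype_val.comp (continuous_projIcc))
      (fun t => (Set.projIcc (0:ℝ) T hT0 t).2)
  have hπ'meas : Measurable π' := hπ'cont.measurable
  -- the map g x = T - τ x is (1/ν)-Lipschitz on [0, ℓ]
  set g : ℝ → ℝ := fun x => T - τ x with hgdef
  have hgLip : LipschitzOnWith (Real.toNNReal (1/ν)) g (Set.Icc 0 ℓ) := by
    rw [lipschitzOnWith_iff_dist_le_mul]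
    intro x hx y hy
    rw [Real.coe_toNNReal (1/ν) (by positivity), Real.dist_eq, Real.dist_eq]
    simp only [hgdef]
    rcases le_total x y with hxy | hxy
    · obtain ⟨ha, hb⟩ := hτd x y hx.1 hxy hy.2
      have h0 : 0 ≤ τ y - τ x := le_trans (div_nonneg (by linarith) hvs.le) ha
      have hd : (y - x) / ν = 1 / ν * (y - x) := by ring
      rw [abs_of_nonneg (by linarith), abs_of_nonpos (by linarith)]
      linarith
    · obtain ⟨ha, hb⟩ := hτd y x hy.1 hxy hx.2
      have h0 : 0 ≤ τ x - τ y := le_trans (div_nonneg (by linarith) hvs.le) ha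
      have hd : (x - y) / ν = 1 / ν * (x - y) := by ring
      rw [abs_of_nonpos (by linarith), abs_of_nonneg (by linarith)]
      linarith
  -- the pushforward of volume on [0,T] under π' is ≤ (1/ν) · volume on [0,ℓ]
  have hmaple : Measure.map π' (volume.restrict (Set.Icc 0 T)) ≤
      (ENNReal.ofReal (1/ν)) • volume.restrict (Set.Icc 0 ℓ) := by
    rw [Measure.le_iff]
    intro A hA
    rw [Measure.map_apply hπ'meas hA, Measure.restrict_apply (hA.preimage hπ'meas),
      Measure.smul_apply, Measure.restrict_apply hA, smul_eq_mul]
    have hsub : π' ⁻¹' A ∩ Set.Icc 0 T ⊆ g '' (A ∩ Set.Icc 0 ℓ) := by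
      rintro t ⟨htA, htT⟩
      obtain ⟨hxmem, hτx⟩ := hπ t htT
      refine ⟨π t, ⟨?_, hxmem⟩, ?_⟩
      · rwa [Set.mem_preimage, hπ'eq t htT] at htA
      · simp only [hgdef]; rw [hτx]; ring
    calc volume (π' ⁻¹' A ∩ Set.Icc 0 T) ≤ volume (g '' (A ∩ Set.Icc 0 ℓ)) :=
          measure_mono hsub
      _ ≤ ENNReal.ofReal (1/ν) * volume (A ∩ Set.Icc 0 ℓ) := by
          rw [← MeasureTheory.hausdorffMeasure_real]
          have hmono : A ∩ Set.Icc 0 ℓ ⊆ Set.Icc 0 ℓ := Set.inter_subset_right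
          have h2 := (hgLip.mono hmono).hausdorffMeasure_image_le
            (d := 1) zero_le_one
          rw [ENNReal.rpow_one] at h2
          refine le_trans h2 (le_of_eq ?_)
          congr 1
  -- the main change-of-variables estimate
  set h : ℝ → ENNReal := fun x => ENNReal.ofReal (|f x| ^ p) with hhdef
  have hhmeas : Measurable h := by
    apply Measurable.ennreal_ofReal
    exact (Real.continuous_rpow_const (by linarith)).measurable.comp hf.abs
  have key : ∫⁻ t in Set.Icc (0:ℝ) T, h (π t) ≤
      ENNReal.ofReal (1/ν) * ∫⁻ x in Set.Icc (0:ℝ) ℓ, h x := by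
    have h1 : ∫⁻ t in Set.Icc (0:ℝ) T, h (π t) = ∫⁻ t in Set.Icc (0:ℝ) T, h (π' t) :=
      setLIntegral_congr_fun measurableSet_Icc
        (fun t ht => by rw [hπ'eq t ht])
    rw [h1, ← lintegral_map hhmeas hπ'meas]
    calc ∫⁻ x, h x ∂(Measure.map π' (volume.restrict (Set.Icc 0 T)))
        ≤ ∫⁻ x, h x ∂((ENNReal.ofReal (1/ν)) • volume.restrict (Set.Icc 0 ℓ)) :=
          lintegral_mono' hmaple le_rfl
      _ = ENNReal.ofReal (1/ν) * ∫⁻ x in Set.Icc (0:ℝ) ℓ, h x :=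
          lintegral_smul_measure _ _
  -- put everything together
  have hCp : (0:ℝ) < p := lt_of_lt_of_le one_pos hp
  calc ∫⁻ t in Set.Icc (0:ℝ) T,
        ENNReal.ofReal (Real.exp (p * ξ (π t)) * |f (π t)| ^ p)
      ≤ ∫⁻ t in Set.Icc (0:ℝ) T,
          ENNReal.ofReal (Real.exp (p * ℓ * ks / ν)) * h (π t) := by
        apply setLIntegral_mono' measurableSet_Icc
        intro t ht
        obtain ⟨hxmem, _⟩ := hπ t ht
        have hξx : ξ (π t) ≤ ℓ * ks / ν := hξb _ hxmem
        have hexp : Real.exp (p * ξ (π t)) ≤ Real.exp (p * ℓ * ks / ν) := by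
          apply Real.exp_le_exp.2
          calc p * ξ (π t) ≤ p * (ℓ * ks / ν) :=
                mul_le_mul_of_nonneg_left hξx hCp.le
            _ = p * ℓ * ks / ν := by ring
        rw [hhdef, ← ENNReal.ofReal_mul (Real.exp_nonneg _)]
        exact ENNReal.ofReal_le_ofReal
          (mul_le_mul_of_nonneg_right hexp (Real.rpow_nonneg (abs_nonneg _) p))
    _ = ENNReal.ofReal (Real.exp (p * ℓ * ks / ν)) * ∫⁻ t in Set.Icc (0:ℝ) T, h (π t) :=
        lintegral_const_mul' _ _ ENNReal.ofReal_ne_top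
    _ ≤ ENNReal.ofReal (Real.exp (p * ℓ * ks / ν)) *
          (ENNReal.ofReal (1/ν) * ∫⁻ x in Set.Icc (0:ℝ) ℓ, h x) :=
        mul_le_mul_right key _
    _ = ENNReal.ofReal ((1 / ν) * Real.exp (p * ℓ * ks / ν)) *
          ∫⁻ x in Set.Icc (0:ℝ) ℓ, h x := by
        rw [← mul_assoc, ← ENNReal.ofReal_mul (Real.exp_nonneg _), mul_comm (Real.exp _)]
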